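/- Let π ∈ (0,1)^n with n ≥ 2 and define h(a,b) = ab + (1−a)(1−b). For the mean-field f_i(x) = ∑_r g_π(r) f̃_i(r,x), any zero x* ∈ (0,1)^n of f satisfies, for all distinct i, j ∈ [n]: |x*_i − x*_j| ≤ h(π_i, 1−π_j) ≤ x*_i + x*_j. -/

import Mathlib

open Real Finset

/-- Sign of a Boolean: `true ↦ +1`, `false ↦ -1`. -/
def sg (b : Bool) : ℝ := if b then 1 else -1

/-- Output distribution (cosh form). -/
noncomputable def gc {n : ℕ} (x : Fin n → ℝ) (r : Fin n → ℝ) : ℝ :=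
  Real.cosh ((∑ j, r j * Real.log ((1 - x j) / x j)) / 2) *
    ∏ j, Real.sqrt (x j * (1 - x j))

/-- Update field coordinate (tanh form). -/
noncomputable def ft {n : ℕ} (r x : Fin n → ℝ) (i : Fin n) : ℝ :=
  (1/2) * (1 - Real.tanh ((∑ j, r j * Real.log ((1 - x j) / x j)) / 2) * r i) - x i

/-- KL divergence from `g_p` to `g_x` (sum over the hypercube `{±1}^n`). -/
noncomputable def V {n : ℕ} (p x : Fin n → ℝ) : ℝ :=
  ∑ r : Fin n → Bool, gc p (fun k => sg (r k)) *
    Real.log (gc p (fun k => sg (r k)) / gc x (fun k => sg (r k)))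

/-- Mean-field vector field `f_i(x) = E_{R ∼ g_p}[f̃_i(R,x)]`. -/
noncomputable def fvec {n : ℕ} (p x : Fin n → ℝ) (i : Fin n) : ℝ :=
  ∑ r : Fin n → Bool, gc p (fun k => sg (r k)) * ft (fun k => sg (r k)) x i

/-- `h(a,b) = ab + (1-a)(1-b)`. -/
def hh (a b : ℝ) : ℝ := a * b + (1 - a) * (1 - b)

/-! ### Auxiliary lemmas -/

/-- Weight function: `wb a true = 1 - a`, `wb a false = a`. -/
def wb (a : ℝ) (b : Bool) : ℝ := if b then 1 - a else a

lemma sg_not (b : Bool) : sg (!b) = - sg b := by cases b <;> simp [sg]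

lemma abs_tanh_le_one (x : ℝ) : |Real.tanh x| ≤ 1 := by
  rw [Real.tanh_eq_sinh_div_cosh, abs_div, abs_of_pos (Real.cosh_pos x),
    div_le_one (Real.cosh_pos x)]
  nlinarith [Real.cosh_sq x, sq_abs (Real.sinh x), abs_nonneg (Real.sinh x), Real.cosh_pos x]

lemma exp_key {a : ℝ} (ha : a ∈ Set.Ioo (0:ℝ) 1) (b : Bool) :
    Real.exp (sg b * Real.log ((1 - a) / a) / 2) * Real.sqrt (a * (1 - a)) = wb a b := by
  obtain ⟨h0, h1⟩ := ha
  have h1' : 0 < 1 - a := by linarith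
  have hq : 0 < (1 - a) / a := div_pos h1' h0
  have hprod : 0 ≤ a * (1 - a) := by positivity
  have hL : Real.exp (Real.log ((1 - a) / a)) = (1 - a) / a := Real.exp_log hq
  have key : ∀ s : ℝ, ∀ c : ℝ, 0 ≤ c →
      (Real.exp (s * Real.log ((1 - a) / a) / 2) * Real.sqrt (a * (1 - a)))^2 = c^2 →
      Real.exp (s * Real.log ((1 - a) / a) / 2) * Real.sqrt (a * (1 - a)) = c := by
    intro s c hc hsq
    have hnn : 0 ≤ Real.exp (s * Real.log ((1 - a) / a) / 2) * Real.sqrt (a * (1 - a)) :=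
      mul_nonneg (Real.exp_pos _).le (Real.sqrt_nonneg _)
    nlinarith [hsq, hnn, hc]
  have hsqrt : Real.sqrt (a * (1 - a)) ^ 2 = a * (1 - a) := Real.sq_sqrt hprod
  cases b with
  | true =>
      have : (Real.exp (sg true * Real.log ((1 - a) / a) / 2) * Real.sqrt (a * (1 - a)))^2
          = (1 - a)^2 := by
        have he : Real.exp (sg true * Real.log ((1 - a) / a) / 2) ^ 2
            = Real.exp (Real.log ((1 - a) / a)) := by
          rw [← Real.exp_nat_mul]
          norm_num [sg]
          ring_nf
        rw [mul_pow, he, hL, hsqrt]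
        field_simp
      simpa [wb] using key (sg true) (1 - a) h1'.le this
  | false =>
      have : (Real.exp (sg false * Real.log ((1 - a) / a) / 2) * Real.sqrt (a * (1 - a)))^2
          = a^2 := by
        have he : Real.exp (sg false * Real.log ((1 - a) / a) / 2) ^ 2
            = Real.exp (- Real.log ((1 - a) / a)) := by
          rw [← Real.exp_nat_mul]
          norm_num [sg]
          ring_nf
        rw [mul_pow, he, Real.exp_neg, hL, hsqrt]
        field_simp
      simpa [wb] using key (sg false) a h0.le this

/-- The `gc` distribution as a mixture of two product measures. -/
lemma gc_eq {n : ℕ} {p : Fin n → ℝ} (hp : ∀ i, p i ∈ Set.Ioo (0:ℝ) 1) (r : Fin n → Bool) :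
    gc p (fun k => sg (r k)) =
      ((∏ k, wb (p k) (r k)) + ∏ k, wb (p k) (!(r k))) / 2 := by
  unfold gc
  rw [Real.cosh_eq]
  have hs : (∑ j, sg (r j) * Real.log ((1 - p j) / p j)) / 2
      = ∑ j, sg (r j) * Real.log ((1 - p j) / p j) / 2 := Finset.sum_div _ _ _
  have hns : -∑ j, sg (r j) * Real.log ((1 - p j) / p j) / 2
      = ∑ j, sg (!(r j)) * Real.log ((1 - p j) / p j) / 2 := by
    rw [← Finset.sum_neg_distrib]
    exact Finset.sum_congr rfl fun k _ => by rw [sg_not]; ring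
  rw [hs, hns, Real.exp_sum, Real.exp_sum]
  rw [div_mul_eq_mul_div, add_mul, ← Finset.prod_mul_distrib, ← Finset.prod_mul_distrib]
  congr 2
  · rw [Finset.prod_congr rfl fun k _ => exp_key (hp k) (r k)]
  · rw [Finset.prod_congr rfl fun k _ => exp_key (hp k) (!(r k))]

lemma sum_prod_bool {n : ℕ} (f : Fin n → Bool → ℝ) :
    ∑ r : Fin n → Bool, ∏ k, f k (r k) = ∏ k, (f k true + f k false) := by
  have h := Finset.prod_univ_sum (fun _ : Fin n => (Finset.univ : Finset Bool)) f
  rw [Fintype.piFinset_univ] at h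
  rw [← h]
  simp

lemma sum_gc_one {n : ℕ} {p : Fin n → ℝ} (hp : ∀ i, p i ∈ Set.Ioo (0:ℝ) 1) :
    ∑ r : Fin n → Bool, gc p (fun k => sg (r k)) = 1 := by
  rw [Finset.sum_congr rfl fun r _ => gc_eq hp r, ← Finset.sum_div,
    Finset.sum_add_distrib, sum_prod_bool (fun k b => wb (p k) b),
    sum_prod_bool (fun k b => wb (p k) (!b))]
  simp [wb]


lemma prod_two_ite {n : ℕ} {i j : Fin n} (hij : i ≠ j) (A B : Fin n → ℝ) :
    ∏ k, (if k = i then A k else if k = j then B k else 1) = A i * B j := by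
  have h : ∀ k : Fin n, (if k = i then A k else if k = j then B k else 1)
      = (if k = i then A k else 1) * (if k = j then B k else 1) := by
    intro k
    by_cases hki : k = i <;> by_cases hkj : k = j
    · exact absurd (hki.symm.trans hkj) hij
    · simp [hki, hkj, hij]
    · simp [hki, hkj, Ne.symm hij]
    · simp [hki, hkj]
  rw [Finset.prod_congr rfl (fun k _ => h k), Finset.prod_mul_distrib,
    Finset.prod_ite_eq' Finset.univ i A, Finset.prod_ite_eq' Finset.univ j B]
  simp

lemma sum_gc_sg {n : ℕ} {p : Fin n → ℝ} (hp : ∀ i, p i ∈ Set.Ioo (0:ℝ) 1)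
    {i j : Fin n} (hij : i ≠ j) :
    ∑ r : Fin n → Bool, gc p (fun k => sg (r k)) * (sg (r i) * sg (r j))
      = (1 - 2 * p i) * (1 - 2 * p j) := by
  have hprod : ∀ (w : Fin n → Bool → ℝ) (r : Fin n → Bool),
      (∏ k, w k (r k)) * (sg (r i) * sg (r j))
        = ∏ k, (w k (r k) * ((if k = i then sg (r k) else 1) * (if k = j then sg (r k) else 1))) := by
    intro w r
    rw [Finset.prod_mul_distrib, Finset.prod_mul_distrib,
      Finset.prod_ite_eq' Finset.univ i (fun k => sg (r k)),
      Finset.prod_ite_eq' Finset.univ j (fun k => sg (r k))]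
    simp [mul_assoc]
  have hS1 : ∑ r : Fin n → Bool, (∏ k, wb (p k) (r k)) * (sg (r i) * sg (r j))
      = (1 - 2 * p i) * (1 - 2 * p j) := by
    rw [Finset.sum_congr rfl fun r _ => hprod (fun k b => wb (p k) b) r,
      sum_prod_bool (fun k b => wb (p k) b * ((if k = i then sg b else 1) * (if k = j then sg b else 1)))]
    have h : ∀ k : Fin n,
        (wb (p k) true * ((if k = i then sg true else 1) * (if k = j then sg true else 1))
          + wb (p k) false * ((if k = i then sg false else 1) * (if k = j then sg false else 1)))
        = (if k = i then 1 - 2 * p k else if k = j then 1 - 2 * p k else 1) := by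
      intro k
      by_cases hki : k = i <;> by_cases hkj : k = j
      · exact absurd (hki.symm.trans hkj) hij
      · simp [hki, hkj, hij, wb, sg]; ring
      · simp [hki, hkj, Ne.symm hij, wb, sg]; ring
      · simp [hki, hkj, wb, sg]
    rw [Finset.prod_congr rfl (fun k _ => h k), prod_two_ite hij]
  have hS2 : ∑ r : Fin n → Bool, (∏ k, wb (p k) (!(r k))) * (sg (r i) * sg (r j))
      = (1 - 2 * p i) * (1 - 2 * p j) := by
    rw [Finset.sum_congr rfl fun r _ => hprod (fun k b => wb (p k) (!b)) r,
      sum_prod_bool (fun k b => wb (p k) (!b) * ((if k = i then sg b else 1) * (if k = j then sg b else 1)))]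
    have h : ∀ k : Fin n,
        (wb (p k) (!true) * ((if k = i then sg true else 1) * (if k = j then sg true else 1))
          + wb (p k) (!false) * ((if k = i then sg false else 1) * (if k = j then sg false else 1)))
        = (if k = i then -(1 - 2 * p k) else if k = j then -(1 - 2 * p k) else 1) := by
      intro k
      by_cases hki : k = i <;> by_cases hkj : k = j
      · exact absurd (hki.symm.trans hkj) hij
      · simp [hki, hkj, hij, wb, sg]; ring
      · simp [hki, hkj, Ne.symm hij, wb, sg]; ring
      · simp [hki, hkj, wb, sg]
    rw [Finset.prod_congr rfl (fun k _ => h k), prod_two_ite hij]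
    ring
  calc ∑ r : Fin n → Bool, gc p (fun k => sg (r k)) * (sg (r i) * sg (r j))
      = ∑ r : Fin n → Bool, (((∏ k, wb (p k) (r k)) * (sg (r i) * sg (r j)))
          + ((∏ k, wb (p k) (!(r k))) * (sg (r i) * sg (r j)))) / 2 := by
        refine Finset.sum_congr rfl fun r _ => ?_
        rw [gc_eq hp r]; ring
    _ = ((∑ r : Fin n → Bool, (∏ k, wb (p k) (r k)) * (sg (r i) * sg (r j)))
          + ∑ r : Fin n → Bool, (∏ k, wb (p k) (!(r k))) * (sg (r i) * sg (r j))) / 2 := by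
        rw [← Finset.sum_div, ← Finset.sum_add_distrib]
    _ = (1 - 2 * p i) * (1 - 2 * p j) := by rw [hS1, hS2]; ring

lemma sg_abs_sub (a b : Bool) : |sg a - sg b| = 1 - sg a * sg b := by
  cases a <;> cases b <;> norm_num [sg]

lemma sg_abs_add (a b : Bool) : |sg a + sg b| = 1 + sg a * sg b := by
  cases a <;> cases b <;> norm_num [sg]

lemma main_aux {n : ℕ} (G T : (Fin n → Bool) → ℝ) (c xi xj : ℝ)
    (hG : ∀ r, 0 ≤ G r) (hT : ∀ r, |T r| ≤ 1) (i j : Fin n)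
    (hM0 : ∑ r : Fin n → Bool, G r = 1)
    (hM2 : ∑ r : Fin n → Bool, G r * (sg (r i) * sg (r j)) = c)
    (hMi : ∑ r : Fin n → Bool, G r * (T r * sg (r i)) = 1 - 2 * xi)
    (hMj : ∑ r : Fin n → Bool, G r * (T r * sg (r j)) = 1 - 2 * xj) :
    |xi - xj| ≤ (1 - c) / 2 ∧ (1 - c) / 2 ≤ xi + xj := by
  have e2 : ∑ r : Fin n → Bool, G r * ((1 - sg (r i) * sg (r j)) / 2) = (1 - c) / 2 := by
    have h : ∑ r : Fin n → Bool, G r * ((1 - sg (r i) * sg (r j)) / 2)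
        = ((∑ r : Fin n → Bool, G r) - ∑ r : Fin n → Bool, G r * (sg (r i) * sg (r j))) / 2 := by
      rw [← Finset.sum_sub_distrib, Finset.sum_div]
      exact Finset.sum_congr rfl fun r _ => by ring
    rw [h, hM0, hM2]
  constructor
  · have e1 : xi - xj = ∑ r : Fin n → Bool, G r * (T r * (sg (r j) - sg (r i)) / 2) := by
      have h : ∑ r : Fin n → Bool, G r * (T r * (sg (r j) - sg (r i)) / 2)
          = ((∑ r : Fin n → Bool, G r * (T r * sg (r j)))
            - ∑ r : Fin n → Bool, G r * (T r * sg (r i))) / 2 := by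
        rw [← Finset.sum_sub_distrib, Finset.sum_div]
        exact Finset.sum_congr rfl fun r _ => by ring
      rw [h, hMi, hMj]; ring
    rw [e1, ← e2]
    calc |∑ r : Fin n → Bool, G r * (T r * (sg (r j) - sg (r i)) / 2)|
        ≤ ∑ r : Fin n → Bool, |G r * (T r * (sg (r j) - sg (r i)) / 2)| :=
          Finset.abs_sum_le_sum_abs _ _
      _ ≤ ∑ r : Fin n → Bool, G r * ((1 - sg (r i) * sg (r j)) / 2) := by
          refine Finset.sum_le_sum fun r _ => ?_
          rw [abs_mul, abs_of_nonneg (hG r)]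
          refine mul_le_mul_of_nonneg_left ?_ (hG r)
          rw [abs_div, abs_mul]
          have h1 : |sg (r j) - sg (r i)| = 1 - sg (r i) * sg (r j) := by
            rw [abs_sub_comm, sg_abs_sub]
          have h2 : (0:ℝ) ≤ 1 - sg (r i) * sg (r j) := h1 ▸ abs_nonneg _
          have h3 := hT r
          have h4 := abs_nonneg (T r)
          rw [h1]
          have : |(2:ℝ)| = 2 := by norm_num
          rw [this]
          apply div_le_div_of_nonneg_right ?_ (by norm_num)
          nlinarith
  · have e3 : xi + xj = ∑ r : Fin n → Bool, G r * (1 - T r * (sg (r i) + sg (r j)) / 2) := by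
      have h : ∑ r : Fin n → Bool, G r * (1 - T r * (sg (r i) + sg (r j)) / 2)
          = (∑ r : Fin n → Bool, G r)
            - ((∑ r : Fin n → Bool, G r * (T r * sg (r i)))
              + ∑ r : Fin n → Bool, G r * (T r * sg (r j))) / 2 := by
        rw [← Finset.sum_add_distrib, Finset.sum_div, ← Finset.sum_sub_distrib]
        exact Finset.sum_congr rfl fun r _ => by ring
      rw [h, hM0, hMi, hMj]; ring
    rw [e3, ← e2]
    refine Finset.sum_le_sum fun r _ => ?_
    refine mul_le_mul_of_nonneg_left ?_ (hG r)
    have h1 : T r * (sg (r i) + sg (r j)) ≤ 1 + sg (r i) * sg (r j) := by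
      calc T r * (sg (r i) + sg (r j)) ≤ |T r * (sg (r i) + sg (r j))| := le_abs_self _
        _ = |T r| * |sg (r i) + sg (r j)| := abs_mul _ _
        _ ≤ 1 * |sg (r i) + sg (r j)| :=
            mul_le_mul_of_nonneg_right (hT r) (abs_nonneg _)
        _ = 1 + sg (r i) * sg (r j) := by rw [one_mul, sg_abs_add]
    linarith

theorem stmt7 (n : ℕ) (hn : 2 ≤ n) (p : Fin n → ℝ) (hp : ∀ i, p i ∈ Set.Ioo (0:ℝ) 1)
    (x : Fin n → ℝ) (hx : ∀ i, x i ∈ Set.Ioo (0:ℝ) 1)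
    (hzero : ∀ i, fvec p x i = 0) (i j : Fin n) (hij : i ≠ j) :
    |x i - x j| ≤ hh (p i) (1 - p j) ∧ hh (p i) (1 - p j) ≤ x i + x j := by
  set G : (Fin n → Bool) → ℝ := fun r => gc p (fun k => sg (r k)) with hGdef
  set T : (Fin n → Bool) → ℝ := fun r =>
    Real.tanh ((∑ k, sg (r k) * Real.log ((1 - x k) / x k)) / 2) with hTdef
  have hG : ∀ r, 0 ≤ G r := by
    intro r
    refine mul_nonneg (Real.cosh_pos _).le (Finset.prod_nonneg fun k _ => Real.sqrt_nonneg _)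
  have hT : ∀ r, |T r| ≤ 1 := fun r => abs_tanh_le_one _
  have hM0 : ∑ r : Fin n → Bool, G r = 1 := sum_gc_one hp
  have key : ∀ i : Fin n, ∑ r : Fin n → Bool, G r * (T r * sg (r i)) = 1 - 2 * x i := by
    intro i
    have h0 := hzero i
    unfold fvec ft at h0
    have hsplit : ∑ r : Fin n → Bool, gc p (fun k => sg (r k)) *
          ((1/2) * (1 - Real.tanh ((∑ k, sg (r k) * Real.log ((1 - x k) / x k)) / 2) * sg (r i)) - x i)
        = (∑ r : Fin n → Bool, G r) * (1/2 - x i)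
          - (∑ r : Fin n → Bool, G r * (T r * sg (r i))) / 2 := by
      rw [Finset.sum_mul, Finset.sum_div, ← Finset.sum_sub_distrib]
      exact Finset.sum_congr rfl fun r _ => by simp only [hGdef, hTdef]; ring
    rw [hsplit, hM0] at h0
    linarith
  have hM2 : ∑ r : Fin n → Bool, G r * (sg (r i) * sg (r j)) = (1 - 2 * p i) * (1 - 2 * p j) :=
    sum_gc_sg hp hij
  have main := main_aux G T ((1 - 2 * p i) * (1 - 2 * p j)) (x i) (x j)
    hG hT i j hM0 hM2 (key i) (key j)
  have hhh : hh (p i) (1 - p j) = (1 - (1 - 2 * p i) * (1 - 2 * p j)) / 2 := by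
    unfold hh; ring
  rw [hhh]
  exact main
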